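/- arXiv:2201.11863 — 2 statements merged into one kernel-verified Lean document; each statement's English description precedes it below -/
import Mathlib

section
/- Let l ≥ 2 and let n be a positive integer. If the de Bruijn graph G_l contains a balanced directed circuit of length n, then the de Bruijn graph G_{l+1} contains a balanced directed cycle of length n (a closed directed trail of n edges in which no vertex other than the initial/final one is repeated, with equally many red and blue edges). -/
/-- Source of an edge of the de Bruijn graph `G_l`: the first `l-1` bits. -/
def dbSrc (l : ℕ) (e : Fin l → Bool) : Fin (l - 1) → Bool :=
  fun j => e (Fin.castLE (Nat.sub_le l 1) j)

/-- Target of an edge of the de Bruijn graph `G_l`: the last `l-1` bits. -/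
def dbTgt (l : ℕ) (e : Fin l → Bool) : Fin (l - 1) → Bool :=
  fun j => e ⟨j.val + 1, by have := j.isLt; omega⟩

/-- `es` is a directed walk in `G_l` from `v` to `v'`: a nonempty list of
edges, consecutive edges compatible, starting at `v` and ending at `v'`. -/
def IsDBWalk (l : ℕ) (v v' : Fin (l - 1) → Bool) (es : List (Fin l → Bool)) : Prop :=
  es.Chain' (fun e e' => dbTgt l e = dbSrc l e') ∧
  es.head?.map (dbSrc l) = some v ∧
  es.getLast?.map (dbTgt l) = some v'

/-- `es` is a directed circuit (closed trail, no repeated edge) in `G_l`. -/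
def IsDBCircuit (l : ℕ) (es : List (Fin l → Bool)) : Prop :=
  ∃ v, IsDBWalk l v v es ∧ es.Nodup

/-- The last bit of an edge of `G_l` (the edge is red if this is `false`,
blue if it is `true`). -/
def dbLastBit (l : ℕ) (hl : 0 < l) (e : Fin l → Bool) : Bool :=
  e ⟨l - 1, by omega⟩

/-- An edge list is balanced if it has equally many red edges (last bit `false`)
and blue edges (last bit `true`). -/
def IsBalancedEdgeList (l : ℕ) (hl : 0 < l) (es : List (Fin l → Bool)) : Prop :=
  es.countP (fun e => !dbLastBit l hl e) = es.countP (fun e => dbLastBit l hl e)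

/-- Glue an edge of `G_l` with a final bit to get an edge of `G_{l+1}`. -/
def dbGlue (l : ℕ) (e : Fin l → Bool) (b : Bool) : Fin (l + 1) → Bool :=
  fun i => if h : i.val < l then e ⟨i.val, h⟩ else b

lemma dbSrc_dbGlue (l : ℕ) (e : Fin l → Bool) (b : Bool) :
    dbSrc (l + 1) (dbGlue l e b) = e := by
  funext j
  have hj : j.val < l := by have := j.isLt; omega
  simp [dbSrc, dbGlue, hj]

lemma dbLastBit_dbGlue (l : ℕ) (e : Fin l → Bool) (b : Bool) :
    dbLastBit (l + 1) (Nat.succ_pos l) (dbGlue l e b) = b := by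
  simp [dbLastBit, dbGlue]

lemma dbTgt_dbGlue (l : ℕ) (hl : 0 < l) (e e' : Fin l → Bool)
    (h : dbTgt l e = dbSrc l e') :
    dbTgt (l + 1) (dbGlue l e (dbLastBit l hl e')) = e' := by
  funext j
  have hj : j.val < l := by have := j.isLt; omega
  by_cases hc : j.val + 1 < l
  · have hj' : j.val < l - 1 := by omega
    have := congrFun h ⟨j.val, hj'⟩
    simp only [dbTgt, dbSrc, dbGlue, hc, dite_true] at this ⊢
    rw [this]
    congr 1
  · have hjl : j.val = l - 1 := by omega
    simp only [dbTgt, dbGlue, dbLastBit]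
    have hnc : ¬ (j.val + 1 < l) := hc
    rw [dif_neg (by omega : ¬ ((j.val + 1) < l))]
    congr 1
    exact (Fin.ext hjl.symm)

lemma getElem_idx_congr {α : Type*} (L : List α) {i j : ℕ} (h : i = j) (hi : i < L.length) :
    L[i]'hi = L[j]'(h ▸ hi) := by subst h; rfl

/-- If `G_l` contains a balanced directed circuit of length `n`, then `G_{l+1}`
contains a balanced directed cycle of length `n` (a closed directed trail of
`n` edges in which no vertex other than the initial/final one is repeated). -/
theorem balanced_circuit_to_balanced_cycle (l n : ℕ) (hl : 2 ≤ l) (hn : 0 < n)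
    (h : ∃ es : List (Fin l → Bool),
        IsDBCircuit l es ∧ es.length = n ∧ IsBalancedEdgeList l (by omega) es) :
    ∃ es : List (Fin (l + 1) → Bool),
      IsDBCircuit (l + 1) es ∧ (es.map (dbSrc (l + 1))).Nodup ∧
      es.length = n ∧ IsBalancedEdgeList (l + 1) (by omega) es := by
  obtain ⟨es, ⟨v, ⟨hchain, hhead, hlast⟩, hnodup⟩, hlen, hbal⟩ := h
  have hl1 : 0 < l := by omega
  have hne : es ≠ [] := by intro he; rw [he] at hlen; simp at hlen; omega
  have hlp : 0 < es.length := by rwa [hlen]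
  -- extract head/last information as getElem facts
  have hhead' : dbSrc l (es[0]'hlp) = v := by
    cases es with
    | nil => simp at hlp
    | cons a t =>
      simp only [List.head?, Option.map_some] at hhead
      simpa using Option.some.inj hhead
  have hlast' : dbTgt l (es[es.length - 1]'(by omega)) = v := by
    rw [List.getLast?_eq_getLast hne, Option.map_some] at hlast
    rw [← List.getLast_eq_getElem hne]
    exact Option.some.inj hlast
  have hchain' := List.isChain_iff_getElem.mp hchain
  -- the cyclic step relation
  have hstep : ∀ i (hi : i < n),
      dbTgt l (es[i]'(by omega)) = dbSrc l (es[(i + 1) % n]'(by rw [hlen]; exact Nat.mod_lt _ hn)) := by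
    intro i hi
    by_cases hc : i + 1 < n
    · have : (i + 1) % n = i + 1 := Nat.mod_eq_of_lt hc
      simp only [this]
      have := hchain' i (by omega)
      simpa using this
    · have hi1 : i = n - 1 := by omega
      have h0 : (i + 1) % n = 0 := by
        rw [show i + 1 = n from by omega, Nat.mod_self]
      rw [getElem_idx_congr es (show i = es.length - 1 by omega),
        getElem_idx_congr es h0, hlast', hhead']
  -- construct the lifted edge list
  set rot := es.rotate 1 with hrot
  have hrotlen : rot.length = n := by simp [hrot, hlen]
  set fs := List.zipWith (fun e e' => dbGlue l e (dbLastBit l hl1 e')) es rot with hfs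
  have hfslen : fs.length = n := by simp [hfs, hlen, hrotlen]
  have hrotget : ∀ i (hi : i < n), (rot[i]'(by omega)) =
      es[(i + 1) % n]'(by rw [hlen]; exact Nat.mod_lt _ hn) := by
    intro i hi
    simp only [hrot]
    rw [List.getElem_rotate]
    exact getElem_idx_congr es (by rw [hlen])  _
  have hfsget : ∀ i (hi : i < n), (fs[i]'(by omega)) =
      dbGlue l (es[i]'(by omega))
        (dbLastBit l hl1 (es[(i + 1) % n]'(by rw [hlen]; exact Nat.mod_lt _ hn))) := by
    intro i hi
    simp only [hfs]
    rw [List.getElem_zipWith, hrotget i hi]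
  -- map of sources is es
  have hmap : fs.map (dbSrc (l + 1)) = es := by
    apply List.ext_getElem
    · simp [hfslen, hlen]
    · intro i h1 h2
      rw [List.getElem_map]
      have hi : i < n := by rwa [List.length_map, hfslen] at h1
      rw [hfsget i hi, dbSrc_dbGlue]
  refine ⟨fs, ⟨es[0]'hlp, ⟨?_, ?_, ?_⟩, ?_⟩, ?_, hfslen, ?_⟩
  · -- chain'
    refine List.isChain_iff_getElem.mpr ?_
    intro i hi
    have hi' : i + 1 < n := by rwa [hfslen] at hi
    have hin : i < n := by omega
    have hin1 : i + 1 < n := by omega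
    rw [hfsget i hin, hfsget (i + 1) hin1]
    rw [dbSrc_dbGlue]
    rw [dbTgt_dbGlue l hl1 _ _ (hstep i hin)]
    exact getElem_idx_congr es (Nat.mod_eq_of_lt hin1) _
  · -- head
    have hfne : fs ≠ [] := by
      intro he; rw [he] at hfslen; simp at hfslen; omega
    cases hfse : fs with
    | nil => exact absurd hfse hfne
    | cons a t =>
      simp only [List.head?, Option.map_some]
      have : a = fs[0]'(by omega) := by simp [hfse]
      rw [this, hfsget 0 hn, dbSrc_dbGlue]
  · -- last
    have hfne : fs ≠ [] := by
      intro he; rw [he] at hfslen; simp at hfslen; omega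
    rw [List.getLast?_eq_getLast hfne, Option.map_some]
    congr 1
    rw [List.getLast_eq_getElem hfne,
      getElem_idx_congr fs (show fs.length - 1 = n - 1 by rw [hfslen]),
      hfsget (n - 1) (by omega),
      dbTgt_dbGlue l hl1 _ _ (hstep (n - 1) (by omega))]
    exact getElem_idx_congr es
      (by rw [Nat.sub_add_cancel hn, Nat.mod_self]) _
  · -- Nodup fs
    have : (fs.map (dbSrc (l + 1))).Nodup := by rw [hmap]; exact hnodup
    exact this.of_map _
  · -- Nodup of map
    rw [hmap]; exact hnodup
  · -- balanced
    have hmaplast : fs.map (dbLastBit (l + 1) (Nat.succ_pos l)) = rot.map (dbLastBit l hl1) := by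
      apply List.ext_getElem
      · simp [hfslen, hrotlen]
      · intro i h1 h2
        have hi : i < n := by rwa [List.length_map, hfslen] at h1
        rw [List.getElem_map, List.getElem_map, hfsget i hi, dbLastBit_dbGlue, hrotget i hi]
    have key : ∀ p : Bool → Bool,
        fs.countP (fun e => p (dbLastBit (l + 1) (Nat.succ_pos l) e)) =
        es.countP (fun e => p (dbLastBit l hl1 e)) := by
      intro p
      have h1 : fs.countP (fun e => p (dbLastBit (l + 1) (Nat.succ_pos l) e)) =
          (fs.map (dbLastBit (l + 1) (Nat.succ_pos l))).countP p := by
        rw [List.countP_map]; rfl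
      have h2 : rot.countP (fun e => p (dbLastBit l hl1 e)) =
          (rot.map (dbLastBit l hl1)).countP p := by
        rw [List.countP_map]; rfl
      rw [h1, hmaplast, ← h2]
      exact (es.rotate_perm 1).countP_eq _
    unfold IsBalancedEdgeList at hbal ⊢
    rw [key (fun b => !b), key (fun b => b)]
    exact hbal
end

section
/- Let n, l, k be positive integers with l ≥ 2. If there exists a balanced generalized de Bruijn sequence with parameters (n, l, k), then there exists a balanced generalized de Bruijn sequence with parameters (n + 2^l, l, k + 1). -/
/-- The number of cyclic occurrences of the word `w : Fin l → Bool` in the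
cyclic binary sequence `s : ZMod n → Bool`. -/
noncomputable def occCount (n l : ℕ) (s : ZMod n → Bool) (w : Fin l → Bool) : ℕ :=
  Nat.card {i : ZMod n // ∀ j : Fin l, s (i + ((j : ℕ) : ZMod n)) = w j}

/-- `s` is a generalized de Bruijn sequence with parameters `(n, l, k)`:
every binary word of length `l` occurs at most `k` times as a cyclic substring. -/
def IsGenDeBruijn (n l k : ℕ) (s : ZMod n → Bool) : Prop :=
  ∀ w : Fin l → Bool, occCount n l s w ≤ k

/-- `s` is balanced: it takes the values `false` and `true` equally often. -/
def IsBalancedSeq (n : ℕ) (s : ZMod n → Bool) : Prop :=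
  Nat.card {i : ZMod n // s i = false} = Nat.card {i : ZMod n // s i = true}


namespace GDB

def win (L m : ℕ) (s : ZMod m → Bool) (i : ZMod m) : Fin L → Bool :=
  fun j => s (i + ((j : ℕ) : ZMod m))

def splice {m m' : ℕ} (a : ZMod m → Bool) (b : ZMod m' → Bool) (j : ZMod m') :
    ZMod (m + m') → Bool :=
  fun p => if p.val < m' then b (j + (p.val : ZMod m')) else a (((p.val - m' : ℕ) : ZMod m))

def spliceIdx (m m' : ℕ) (j : ZMod m') : ZMod (m + m') → (ZMod m' ⊕ ZMod m) :=
  fun p => if p.val < m' then Sum.inl (j + (p.val : ZMod m')) else Sum.inr ((p.val - m' : ℕ) : ZMod m)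

section Splice

variable {L m m' : ℕ} {a : ZMod m → Bool} {b : ZMod m' → Bool} {j : ZMod m'}

lemma natCast_eq_natCast_of_eq_add (k : ℕ) {x y : ℕ} (hxy : x = y + k) :
    ((x : ZMod k)) = (y : ZMod k) := by
  subst hxy; push_cast [ZMod.natCast_self]; ring

lemma splice_val (hm : 0 < m) (hm' : 0 < m') (p : ZMod (m + m')) :
    splice a b j p = Sum.elim b a (spliceIdx m m' j p) := by
  unfold splice spliceIdx
  by_cases h : p.val < m' <;> simp [h]

lemma splice_win (hm : 0 < m) (hL : 0 < L) (hLm' : L ≤ m')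
    (H : ∀ c : ℕ, c + 1 < L → b (j + (c : ZMod m')) = a ((c : ZMod m))) (p : ZMod (m + m')) :
    win L (m + m') (splice a b j) p =
      Sum.elim (win L m' b) (win L m a) (spliceIdx m m' j p) := by
  haveI : NeZero (m + m') := ⟨by omega⟩
  haveI : NeZero m' := ⟨by omega⟩
  haveI : NeZero m := ⟨by omega⟩
  have hP : p.val < m + m' := p.val_lt
  funext jj
  have hc : (jj : ℕ) < L := jj.isLt
  set P := p.val with hPdef
  set c := (jj : ℕ) with hcdef
  have hQ : (p + ((c : ℕ) : ZMod (m + m'))).val = (P + c) % (m + m') := by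
    conv_lhs => rw [ZMod.val_add, ZMod.val_natCast]
    conv_rhs => rw [Nat.add_mod]
    rw [Nat.mod_eq_of_lt hP]
  simp only [win, splice, hQ]
  rw [← hcdef, hQ]
  simp only [spliceIdx]
  rw [← hPdef]
  by_cases hPm : P < m'
  · simp only [spliceIdx, if_pos hPm, Sum.elim_inl, win]
    have hcast : (j + (P : ZMod m') + (c : ZMod m')) = j + ((P + c : ℕ) : ZMod m') := by
      push_cast; ring
    rw [hcast]
    rcases lt_or_ge (P + c) m' with h1 | h1
    · rw [Nat.mod_eq_of_lt (by omega), if_pos h1]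
    · rcases lt_or_ge (P + c) (m + m') with h2 | h2
      · rw [Nat.mod_eq_of_lt h2, if_neg (by omega)]
        set r := P + c - m' with hr
        have hr1 : r + 1 < L := by omega
        have e1 : ((P + c : ℕ) : ZMod m') = (r : ZMod m') :=
          natCast_eq_natCast_of_eq_add m' (by omega)
        have e2 : ((P + c - m' : ℕ) : ZMod m) = (r : ZMod m) := by rw [← hr]
        rw [e1, e2, H r hr1]
      · set q := P + c - (m + m') with hq
        have hQv : (P + c) % (m + m') = q := by
          rw [Nat.mod_eq_sub_mod h2, Nat.mod_eq_of_lt (by omega)]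
        rw [hQv, if_pos (by omega : q < m')]
        set r1 := P + c - m' with hr1d
        have h1' : r1 + 1 < L := by omega
        have hq1 : q + 1 < L := by omega
        have e1 : ((P + c : ℕ) : ZMod m') = (r1 : ZMod m') :=
          natCast_eq_natCast_of_eq_add m' (by omega)
        have e2 : ((r1 : ℕ) : ZMod m) = ((q : ℕ) : ZMod m) :=
          natCast_eq_natCast_of_eq_add m (by omega)
        rw [H q hq1, e1, H r1 h1', e2]
  · simp only [spliceIdx, if_neg hPm, Sum.elim_inr, win]
    have hcast : ((P - m' : ℕ) : ZMod m) + (c : ZMod m) = ((P - m' + c : ℕ) : ZMod m) := by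
      push_cast; ring
    rw [hcast]
    rcases lt_or_ge (P + c) (m + m') with h2 | h2
    · rw [Nat.mod_eq_of_lt h2, if_neg (by omega)]
      have : P + c - m' = P - m' + c := by omega
      rw [this]
    · set q := P + c - (m + m') with hq
      have hQv : (P + c) % (m + m') = q := by
        rw [Nat.mod_eq_sub_mod h2, Nat.mod_eq_of_lt (by omega)]
      rw [hQv, if_pos (by omega : q < m')]
      have hq1 : q + 1 < L := by omega
      rw [H q hq1]
      exact congrArg a (natCast_eq_natCast_of_eq_add m (by omega)).symm

lemma spliceIdx_bijective (hm : 0 < m) (hm' : 0 < m') :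
    Function.Bijective (spliceIdx m m' (j := j)) := by
  haveI : NeZero (m + m') := ⟨by omega⟩
  haveI : NeZero m' := ⟨by omega⟩
  haveI : NeZero m := ⟨by omega⟩
  rw [Fintype.bijective_iff_injective_and_card]
  constructor
  · intro p p' hpp
    unfold spliceIdx at hpp
    have hP : p.val < m + m' := p.val_lt
    have hP' : p'.val < m + m' := p'.val_lt
    apply ZMod.val_injective
    by_cases h1 : p.val < m' <;> by_cases h2 : p'.val < m'
    · rw [if_pos h1, if_pos h2] at hpp
      have hv := congrArg ZMod.val (add_left_cancel (Sum.inl.inj hpp))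
      rwa [ZMod.val_cast_of_lt h1, ZMod.val_cast_of_lt h2] at hv
    · rw [if_pos h1, if_neg h2] at hpp; exact absurd hpp (by simp)
    · rw [if_neg h1, if_pos h2] at hpp; exact absurd hpp (by simp)
    · rw [if_neg h1, if_neg h2] at hpp
      have hv := congrArg ZMod.val (Sum.inr.inj hpp)
      rw [ZMod.val_cast_of_lt (by omega : p.val - m' < m),
        ZMod.val_cast_of_lt (by omega : p'.val - m' < m)] at hv
      omega
  · simp [ZMod.card, Fintype.card_sum]; omega

def sumSubtype {α β : Type*} (P : α ⊕ β → Prop) :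
    {x : α ⊕ β // P x} ≃ ({a : α // P (Sum.inl a)} ⊕ {b : β // P (Sum.inr b)}) where
  toFun := fun x => match x with
    | ⟨Sum.inl a, h⟩ => Sum.inl ⟨a, h⟩
    | ⟨Sum.inr b, h⟩ => Sum.inr ⟨b, h⟩
  invFun := Sum.elim (fun a => ⟨Sum.inl a.1, a.2⟩) (fun b => ⟨Sum.inr b.1, b.2⟩)
  left_inv := by rintro ⟨x | x, h⟩ <;> rfl
  right_inv := by rintro (⟨a, h⟩ | ⟨b, h⟩) <;> rfl

lemma card_eq_of_comp {α β γ X : Type*} [Finite β] [Finite γ]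
    (f : α → X) (g : β → X) (h : γ → X) (e : α → β ⊕ γ) (he : Function.Bijective e)
    (hf : ∀ p, f p = Sum.elim g h (e p)) (w : X) :
    Nat.card {p // f p = w} = Nat.card {q // g q = w} + Nat.card {q // h q = w} := by
  rw [← Nat.card_sum]
  apply Nat.card_congr
  exact (Equiv.subtypeEquiv (q := fun s => Sum.elim g h s = w) (Equiv.ofBijective e he)
    (fun p => by rw [hf p]; exact Iff.rfl)).trans (sumSubtype _)

lemma splice_card_val (hm : 0 < m) (hm' : 0 < m') (v : Bool) :
    Nat.card {p : ZMod (m + m') // splice a b j p = v} =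
      Nat.card {q : ZMod m' // b q = v} + Nat.card {q : ZMod m // a q = v} := by
  haveI : NeZero m' := ⟨by omega⟩
  haveI : NeZero m := ⟨by omega⟩
  exact card_eq_of_comp _ b a _ (spliceIdx_bijective hm hm') (splice_val hm hm') v

lemma splice_card_win (hm : 0 < m) (hL : 0 < L) (hLm' : L ≤ m')
    (H : ∀ c : ℕ, c + 1 < L → b (j + (c : ZMod m')) = a ((c : ZMod m))) (w : Fin L → Bool) :
    Nat.card {p : ZMod (m + m') // win L (m + m') (splice a b j) p = w} =
      Nat.card {q : ZMod m' // win L m' b q = w} + Nat.card {q : ZMod m // win L m a q = w} := by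
  haveI : NeZero m' := ⟨by omega⟩
  haveI : NeZero m := ⟨by omega⟩
  exact card_eq_of_comp _ _ _ _ (spliceIdx_bijective hm (by omega))
    (splice_win hm hL hLm' H) w

end Splice

section Bij
variable {L m : ℕ}

lemma card_win_eq_one {s : ZMod m → Bool} (hm : 0 < m)
    (hb : Function.Bijective (win L m s)) (w : Fin L → Bool) :
    Nat.card {i : ZMod m // win L m s i = w} = 1 := by
  haveI : NeZero m := ⟨by omega⟩
  have e : {i : ZMod m // win L m s i = w} ≃ {x : Fin L → Bool // x = w} :=
    Equiv.subtypeEquiv (Equiv.ofBijective _ hb) (fun i => Iff.rfl)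
  rw [Nat.card_congr e, Nat.card_eq_fintype_card, Fintype.card_subtype_eq]

lemma balanced_of_bij {s : ZMod m → Bool} (hm : 0 < m) (hL : 0 < L)
    (hb : Function.Bijective (win L m s)) :
    Nat.card {i : ZMod m // s i = false} = Nat.card {i : ZMod m // s i = true} := by
  haveI : NeZero m := ⟨by omega⟩
  have key : ∀ v : Bool, Nat.card {i : ZMod m // s i = v}
      = Nat.card {x : Fin L → Bool // x ⟨0, hL⟩ = v} := by
    intro v
    apply Nat.card_congr
    apply Equiv.subtypeEquiv (Equiv.ofBijective _ hb)
    intro i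
    show s i = v ↔ win L m s i ⟨0, hL⟩ = v
    simp [win]
  rw [key false, key true]
  apply Nat.card_congr
  exact {
    toFun := fun x => ⟨fun c => !x.1 c, by simp [x.2]⟩
    invFun := fun x => ⟨fun c => !x.1 c, by simp [x.2]⟩
    left_inv := by intro x; ext c; simp
    right_inv := by intro x; ext c; simp }

end Bij

section Par
variable {N : ℕ}

def par (s : ZMod N → Bool) (m : ℕ) : Bool :=
  decide (((Finset.range m).filter (fun r => s ((r : ℕ) : ZMod N) = true)).card % 2 = 1)

lemma par_succ (s : ZMod N → Bool) (m : ℕ) :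
    par s (m + 1) = xor (s ((m : ℕ) : ZMod N)) (par s m) := by
  unfold par
  rw [Finset.range_add_one, Finset.filter_insert]
  by_cases h : s ((m : ℕ) : ZMod N) = true
  · rw [if_pos h, Finset.card_insert_of_notMem (by simp)]
    set c := ((Finset.range m).filter (fun r => s ((r : ℕ) : ZMod N) = true)).card
    by_cases hc : c % 2 = 1 <;> simp [h, hc] <;> omega
  · rw [if_neg h]
    have h' : s ((m : ℕ) : ZMod N) = false := by
      cases hsm : s ((m : ℕ) : ZMod N) 
      · rfl
      · exact absurd hsm h
    simp [h']

def integ (s : ZMod N → Bool) : ZMod N → Bool := fun i => par s i.val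

lemma integ_succ [NeZero N] (hN : 1 < N) (s : ZMod N → Bool) (heven : par s N = false)
    (i : ZMod N) : integ s (i + 1) = xor (s i) (integ s i) := by
  have hv : i.val < N := i.val_lt
  have hcast : ((i.val : ℕ) : ZMod N) = i := ZMod.natCast_rightInverse i
  have hone : (1 : ZMod N).val = 1 := ZMod.val_one_eq_one_mod N ▸ Nat.mod_eq_of_lt hN
  rcases Nat.lt_or_ge (i.val + 1) N with h | h
  · have hval : (i + 1).val = i.val + 1 := by
      rw [ZMod.val_add, hone, Nat.mod_eq_of_lt h]
    show par s (i + 1).val = _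
    rw [hval, par_succ, hcast]
    rfl
  · have hN' : i.val + 1 = N := by omega
    have h1 : (i + 1).val = 0 := by
      rw [ZMod.val_add, hone, hN', Nat.mod_self]
    show par s (i + 1).val = _
    rw [h1]
    have h0 : par s 0 = false := by unfold par; simp
    rw [h0]
    have hstep := par_succ s i.val
    rw [hN', heven, hcast] at hstep
    show false = xor (s i) (integ s i)
    unfold integ
    cases hsi : s i <;> cases hpi : par s i.val <;>
      simp [hsi, hpi] at hstep ⊢
end Par

lemma Phi_bijective {l : ℕ} (hl : 2 ≤ l) (s t : ZMod (2 ^ l) → Bool)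
    (hs : Function.Bijective (win l (2 ^ l) s))
    (ht : ∀ i, t (i + 1) = xor (s i) (t i)) :
    Function.Bijective
      (fun xi : Bool × ZMod (2 ^ l) =>
        win (l + 1) (2 ^ l) (fun i => xor xi.1 (t i)) xi.2) := by
  haveI : NeZero (2 ^ l) := ⟨by positivity⟩
  have sxor : ∀ c, s c = xor (t (c + 1)) (t c) := by
    intro c
    rw [ht c]
    cases s c <;> cases t c <;> rfl
  rw [Fintype.bijective_iff_injective_and_card]
  constructor
  · rintro ⟨x, i⟩ ⟨x', i'⟩ hh
    simp only at hh
    have hw : ∀ j : Fin (l + 1),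
        xor x (t (i + ((j : ℕ) : ZMod (2 ^ l)))) = xor x' (t (i' + ((j : ℕ) : ZMod (2 ^ l)))) :=
      fun j => congrFun hh j
    have key : ∀ a b a' b' : Bool, xor x a = xor x' a' → xor x b = xor x' b' →
        xor b a = xor b' a' := by
      cases x <;> cases x' <;> decide
    have hde : win l (2 ^ l) s i = win l (2 ^ l) s i' := by
      funext j
      have h1 := hw ⟨(j : ℕ), by omega⟩
      have h2 := hw ⟨(j : ℕ) + 1, by omega⟩
      simp only [Fin.val_mk] at h1 h2
      show s (i + ((j : ℕ) : ZMod (2 ^ l))) = s (i' + ((j : ℕ) : ZMod (2 ^ l)))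
      have ha : ∀ z : ZMod (2 ^ l), z + (((j : ℕ) + 1 : ℕ) : ZMod (2 ^ l))
          = z + ((j : ℕ) : ZMod (2 ^ l)) + 1 := by
        intro z; push_cast; ring
      rw [sxor, sxor, ← ha, ← ha]
      exact key _ _ _ _ h1 h2
    have hii : i = i' := hs.1 hde
    subst hii
    have h0 := hw ⟨0, by omega⟩
    have hx : x = x' := by
      cases x <;> cases x' <;> simp at h0 <;> rfl
    rw [hx]
  · simp only [Fintype.card_prod, ZMod.card, Fintype.card_fun, Fintype.card_bool,
      Fintype.card_fin]
    rw [pow_succ]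
    ring
lemma common_vertex {l N : ℕ} (hl : 2 ≤ l) (hN : 0 < N) (t : ZMod N → Bool)
    (hsurj : Function.Surjective
      (fun xi : Bool × ZMod N => win (l + 1) N (fun i => xor xi.1 (t i)) xi.2)) :
    ∃ p q : ZMod N, ∀ c : Fin l,
      (!(t (q + ((c : ℕ) : ZMod N)))) = t (p + ((c : ℕ) : ZMod N)) := by
  by_contra hno
  push_neg at hno
  set S : Set (Fin l → Bool) :=
    {u | ∃ p, ∀ c : Fin l, t (p + ((c : ℕ) : ZMod N)) = u c} with hS
  have hnotboth : ∀ u ∈ S, (fun c => !u c) ∉ S := by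
    rintro u ⟨p, hp⟩ ⟨q, hq⟩
    obtain ⟨c, hc⟩ := hno q p
    apply hc
    rw [hq c, hp c]
  have hclosure : ∀ u ∈ S, ∀ b : Bool,
      (fun c : Fin l => if h : (c : ℕ) + 1 < l then u ⟨(c : ℕ) + 1, h⟩ else b) ∈ S := by
    intro u huS b
    obtain ⟨⟨x, i⟩, hxi⟩ :=
      hsurj (fun j : Fin (l + 1) => if h : (j : ℕ) < l then u ⟨(j : ℕ), h⟩ else b)
    have hxi' : ∀ j : Fin (l + 1), xor x (t (i + ((j : ℕ) : ZMod N)))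
        = if h : (j : ℕ) < l then u ⟨(j : ℕ), h⟩ else b := fun j => congrFun hxi j
    cases x with
    | true =>
      exfalso
      apply hnotboth u huS
      refine ⟨i, fun c => ?_⟩
      have h1 := hxi' ⟨(c : ℕ), by omega⟩
      simp only [Fin.val_mk] at h1
      rw [dif_pos c.isLt] at h1
      have : t (i + ((c : ℕ) : ZMod N)) = !(u ⟨(c : ℕ), c.isLt⟩) := by
        cases htv : t (i + ((c : ℕ) : ZMod N)) <;> rw [htv] at h1 <;> simp at h1 <;>
          simp [h1]
      rw [this, Fin.eta]
    | false =>
      refine ⟨i + 1, fun c => ?_⟩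
      have h1 := hxi' ⟨(c : ℕ) + 1, by omega⟩
      simp only [Fin.val_mk] at h1
      have harith : (i + 1) + ((c : ℕ) : ZMod N) = i + ((((c : ℕ) + 1) : ℕ) : ZMod N) := by
        push_cast; ring
      rw [harith]
      rw [Bool.false_xor] at h1
      rw [h1]
  have hall : ∀ m : ℕ, m ≤ l → ∀ w : Fin l → Bool,
      (∀ c : Fin l, (c : ℕ) + m < l → w c = t ((((c : ℕ) + m) : ℕ) : ZMod N)) → w ∈ S := by
    intro m
    induction m with
    | zero =>
      intro _ w hw
      refine ⟨0, fun c => ?_⟩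
      have := hw c (by omega)
      rw [this, zero_add, Nat.add_zero]
    | succ m ihm =>
      intro hm1 w hw
      set u : Fin l → Bool := fun c =>
        if (c : ℕ) = 0 then t ((m : ℕ) : ZMod N) else w ⟨(c : ℕ) - 1, by omega⟩ with hu
      have huS : u ∈ S := by
        apply ihm (by omega)
        intro c hcm
        by_cases h0 : (c : ℕ) = 0
        · simp only [hu, if_pos h0, h0, Nat.zero_add]
        · simp only [hu, if_neg h0]
          have hcc := hw ⟨(c : ℕ) - 1, by omega⟩ (by simp only [Fin.val_mk]; omega)
          simp only [Fin.val_mk] at hcc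
          rw [hcc]
          have he : ((c : ℕ) - 1) + (m + 1) = (c : ℕ) + m := by omega
          rw [he]
      have hwu : w = (fun c : Fin l =>
          if h : (c : ℕ) + 1 < l then u ⟨(c : ℕ) + 1, h⟩ else w ⟨l - 1, by omega⟩) := by
        funext c
        by_cases h : (c : ℕ) + 1 < l
        · rw [dif_pos h]
          simp [hu, Fin.eta]
        · rw [dif_neg h]
          congr 1
          apply Fin.ext
          simp only [Fin.val_mk]
          omega
      rw [hwu]
      exact hclosure u huS (w ⟨l - 1, by omega⟩)
  have hu0 : (fun c : Fin l => t ((c : ℕ) : ZMod N)) ∈ S :=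
    ⟨0, fun c => by rw [zero_add]⟩
  have hnu0 := hall l le_rfl (fun c => !(t ((c : ℕ) : ZMod N)))
    (fun c hc => absurd hc (by omega))
  exact hnotboth _ hu0 hnu0
lemma filter_range_card {N : ℕ} [NeZero N] (s : ZMod N → Bool) :
    ((Finset.range N).filter (fun r => s ((r : ℕ) : ZMod N) = true)).card
      = Fintype.card {i : ZMod N // s i = true} := by
  rw [Fintype.card_subtype]
  apply Finset.card_bij (fun r _ => ((r : ℕ) : ZMod N))
  · intro r hr
    simp only [Finset.mem_filter, Finset.mem_range] at hr
    exact Finset.mem_filter.2 ⟨Finset.mem_univ _, hr.2⟩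
  · intro r hr r' hr' hrr
    simp only [Finset.mem_filter, Finset.mem_range] at hr hr'
    have := congrArg ZMod.val hrr
    rwa [ZMod.val_cast_of_lt hr.1, ZMod.val_cast_of_lt hr'.1] at this
  · intro i hi
    refine ⟨i.val, ?_, ZMod.natCast_rightInverse i⟩
    simp only [Finset.mem_filter, Finset.mem_range]
    exact ⟨i.val_lt, by rw [ZMod.natCast_rightInverse i]
                        exact (Finset.mem_filter.1 hi).2⟩

theorem exists_deBruijn (l : ℕ) (hl : 2 ≤ l) :
    ∃ D : ZMod (2 ^ l) → Bool, Function.Bijective (win l (2 ^ l) D) := by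
  induction l, hl using Nat.le_induction with
  | base => exact ⟨fun i => decide (2 ≤ i.val), by decide⟩
  | succ l hl ih =>
    obtain ⟨s, hs⟩ := ih
    haveI : NeZero (2 ^ l) := ⟨by positivity⟩
    have hN0 : 0 < 2 ^ l := by positivity
    -- the number of `true` values of s
    have hbal : Nat.card {i : ZMod (2 ^ l) // s i = false}
        = Nat.card {i : ZMod (2 ^ l) // s i = true} :=
      balanced_of_bij hN0 (by omega) hs
    rw [Nat.card_eq_fintype_card, Nat.card_eq_fintype_card] at hbal
    have hsum : Fintype.card {i : ZMod (2 ^ l) // s i = true}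
        + Fintype.card {i : ZMod (2 ^ l) // s i = false} = 2 ^ l := by
      classical
      have h1 := Finset.card_filter_add_card_filter_not
        (s := (Finset.univ : Finset (ZMod (2 ^ l)))) (p := fun i => s i = true)
      have h2 : Finset.filter (fun i => ¬ (s i = true)) (Finset.univ : Finset (ZMod (2 ^ l)))
          = Finset.filter (fun i => s i = false) Finset.univ := by
        apply Finset.filter_congr
        intro i _
        simp [Bool.not_eq_true]
      rw [h2] at h1
      rw [Fintype.card_subtype, Fintype.card_subtype, h1, Finset.card_univ]
      exact ZMod.card (2 ^ l)
    have hpow : (2 : ℕ) ^ l = 2 * 2 ^ (l - 1) := by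
      conv_lhs => rw [show l = (l - 1) + 1 by omega]
      rw [pow_succ]; ring
    have htrueN : Fintype.card {i : ZMod (2 ^ l) // s i = true} = 2 ^ (l - 1) := by omega
    have heven : par s (2 ^ l) = false := by
      unfold par
      rw [filter_range_card, htrueN]
      have hmod : (2 : ℕ) ^ (l - 1) % 2 = 0 := by
        have : (2 : ℕ) ^ (l - 1) = 2 * 2 ^ (l - 2) := by
          conv_lhs => rw [show l - 1 = (l - 2) + 1 by omega]
          rw [pow_succ]; ring
        omega
      simp [hmod]
    have ht : ∀ i, integ s (i + 1) = xor (s i) (integ s i) :=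
      integ_succ (by omega) s heven
    have hPhi := Phi_bijective hl s (integ s) hs ht
    obtain ⟨p, q, hpq⟩ := common_vertex hl hN0 (integ s) hPhi.surjective
    -- splice `t` (rotated to start at `p`) with its complement
    have H : ∀ c : ℕ, c + 1 < l + 1 →
        (fun i => !(integ s i)) (q + ((c : ℕ) : ZMod (2 ^ l)))
          = (fun i => integ s (p + i)) ((c : ℕ) : ZMod (2 ^ l)) := by
      intro c hc
      have := hpq ⟨c, by omega⟩
      simpa using this
    have hwinD := splice_win (a := fun i => integ s (p + i)) (b := fun i => !(integ s i))
      (j := q) hN0 (by omega) (by have := l.lt_two_pow_self; omega) H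
    -- the bijection of the sum with `Bool × ZMod (2^l)`
    have hg : Function.Bijective (Sum.elim (fun i : ZMod (2 ^ l) => ((true, i) : Bool × ZMod (2 ^ l)))
        (fun i : ZMod (2 ^ l) => ((false, p + i) : Bool × ZMod (2 ^ l)))) := by
      rw [Function.bijective_iff_has_inverse]
      refine ⟨fun xi => if xi.1 then Sum.inl xi.2 else Sum.inr (xi.2 - p), ?_, ?_⟩
      · rintro (i | i) <;> simp
      · rintro ⟨x, i⟩
        cases x <;> simp
    have hcomp : Sum.elim (win (l + 1) (2 ^ l) (fun i => !(integ s i)))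
          (win (l + 1) (2 ^ l) (fun i => integ s (p + i)))
        = (fun xi : Bool × ZMod (2 ^ l) =>
            win (l + 1) (2 ^ l) (fun i => xor xi.1 (integ s i)) xi.2)
          ∘ (Sum.elim (fun i : ZMod (2 ^ l) => ((true, i) : Bool × ZMod (2 ^ l)))
             (fun i : ZMod (2 ^ l) => ((false, p + i) : Bool × ZMod (2 ^ l)))) := by
      funext q'
      rcases q' with i | i
      · funext j
        simp [win]
      · funext j
        simp only [Sum.elim_inr, Function.comp_apply, win, Bool.false_xor]
        congr 1
        ring
    have hbijD : Function.Bijective (win (l + 1) (2 ^ l + 2 ^ l)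
        (splice (fun i => integ s (p + i)) (fun i => !(integ s i)) q)) := by
      have hb2 : Function.Bijective ((Sum.elim (win (l + 1) (2 ^ l) (fun i => !(integ s i)))
          (win (l + 1) (2 ^ l) (fun i => integ s (p + i))))
            ∘ (spliceIdx (2 ^ l) (2 ^ l) q)) := by
        apply Function.Bijective.comp
        · rw [hcomp]
          exact hPhi.comp hg
        · exact spliceIdx_bijective hN0 hN0
      have : win (l + 1) (2 ^ l + 2 ^ l)
          (splice (fun i => integ s (p + i)) (fun i => !(integ s i)) q)
          = (Sum.elim (win (l + 1) (2 ^ l) (fun i => !(integ s i)))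
              (win (l + 1) (2 ^ l) (fun i => integ s (p + i))))
            ∘ (spliceIdx (2 ^ l) (2 ^ l) q) := funext hwinD
      rw [this]
      exact hb2
    have hNN : 2 ^ (l + 1) = 2 ^ l + 2 ^ l := by rw [pow_succ]; ring
    rw [hNN]
    exact ⟨_, hbijD⟩
end GDB

/-- If a balanced generalized de Bruijn sequence with parameters `(n, l, k)`
exists, then one with parameters `(n + 2^l, l, k + 1)` exists. -/
theorem balanced_genDeBruijn_step (n l k : ℕ) (hn : 0 < n) (hl : 2 ≤ l) (hk : 0 < k)
    (h : ∃ s : ZMod n → Bool, IsGenDeBruijn n l k s ∧ IsBalancedSeq n s) :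
    ∃ s : ZMod (n + 2 ^ l) → Bool,
      IsGenDeBruijn (n + 2 ^ l) l (k + 1) s ∧ IsBalancedSeq (n + 2 ^ l) s := by
  obtain ⟨s, hgdb, hbal⟩ := h
  haveI : NeZero n := ⟨by omega⟩
  haveI : NeZero (2 ^ l) := ⟨by positivity⟩
  obtain ⟨D, hD⟩ := GDB.exists_deBruijn l hl
  obtain ⟨j, hj⟩ := hD.surjective (fun c : Fin l => s ((c : ℕ) : ZMod n))
  have H : ∀ c : ℕ, c + 1 < l → D (j + ((c : ℕ) : ZMod (2 ^ l))) = s ((c : ℕ) : ZMod n) := by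
    intro c hc
    have := congrFun hj ⟨c, by omega⟩
    simpa [GDB.win] using this
  refine ⟨GDB.splice s D j, ?_, ?_⟩
  · intro w
    have hocc : occCount (n + 2 ^ l) l (GDB.splice s D j) w
        = Nat.card {p : ZMod (n + 2 ^ l) // GDB.win l (n + 2 ^ l) (GDB.splice s D j) p = w} := by
      unfold occCount
      apply Nat.card_congr
      exact Equiv.subtypeEquivRight (fun i => funext_iff.symm)
    rw [hocc, GDB.splice_card_win (a := s) (b := D) (j := j) hn (by omega)
      (le_of_lt (show l < 2 ^ l from l.lt_two_pow_self)) H w]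
    have h1 : Nat.card {q : ZMod (2 ^ l) // GDB.win l (2 ^ l) D q = w} = 1 :=
      GDB.card_win_eq_one (by positivity) hD w
    have h2 : Nat.card {q : ZMod n // GDB.win l n s q = w} ≤ k := by
      have hw := hgdb w
      unfold occCount at hw
      calc Nat.card {q : ZMod n // GDB.win l n s q = w}
          = Nat.card {i : ZMod n // ∀ j : Fin l, s (i + ((j : ℕ) : ZMod n)) = w j} :=
            Nat.card_congr (Equiv.subtypeEquivRight (fun i => funext_iff))
        _ ≤ k := hw
    omega
  · unfold IsBalancedSeq
    rw [GDB.splice_card_val (a := s) (b := D) (j := j) hn (by positivity) false,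
      GDB.splice_card_val (a := s) (b := D) (j := j) hn (by positivity) true]
    have hDbal := GDB.balanced_of_bij (m := 2 ^ l) (by positivity) (by omega : 0 < l) hD
    unfold IsBalancedSeq at hbal
    omega
end
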